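/- For μ, μ' ∈ (0,1) with Δ = |μ' − μ|, the binary KL divergence satisfies kl(μ, μ') ≥ (1/2) · max( Δ²/(μ(1-μ)+Δ), Δ²/(μ'(1-μ')+Δ) ). -/

import Mathlib

/-- Binary Kullback-Leibler divergence between `Bernoulli(p)` and `Bernoulli(q)`. -/
noncomputable def klBin (p q : ℝ) : ℝ :=
  p * Real.log (p / q) + (1 - p) * Real.log ((1 - p) / (1 - q))

open Real Set

lemma hasDerivAt_klBin (μ : ℝ) (hμ : μ ∈ Ioo (0:ℝ) 1) {q : ℝ} (hq : q ∈ Ioo (0:ℝ) 1) :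
    HasDerivAt (fun q => klBin μ q) ((q - μ) / (q * (1 - q))) q := by
  have h1 : q ≠ 0 := ne_of_gt hq.1
  have h2 : (1:ℝ) - q ≠ 0 := by have := hq.2; intro h; linarith
  have hμ1 : (0:ℝ) < μ := hμ.1
  have hμ2 : μ < 1 := hμ.2
  have hg : HasDerivAt (fun q : ℝ =>
      μ * (Real.log μ - Real.log q) + (1 - μ) * (Real.log (1 - μ) - Real.log (1 - q)))
      (μ * (0 - 1 / q) + (1 - μ) * (0 - (-1) / (1 - q))) q := by
    have hlq : HasDerivAt (fun q : ℝ => Real.log q) (1 / q) q := by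
      simpa using Real.hasDerivAt_log h1
    have hl1q : HasDerivAt (fun q : ℝ => Real.log (1 - q)) ((-1) / (1 - q)) q := by
      have h := ((hasDerivAt_id q).const_sub 1).log h2
      simpa using h
    exact (((hasDerivAt_const q (Real.log μ)).sub hlq).const_mul μ).add
      (((hasDerivAt_const q (Real.log (1 - μ))).sub hl1q).const_mul (1 - μ))
  have heq : (fun q : ℝ =>
      μ * (Real.log μ - Real.log q) + (1 - μ) * (Real.log (1 - μ) - Real.log (1 - q)))
      =ᶠ[nhds q] fun q => klBin μ q := by
    filter_upwards [Ioo_mem_nhds hq.1 hq.2] with x hx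
    have hx1 : (0:ℝ) < x := hx.1
    have hx2 : (0:ℝ) < 1 - x := by linarith [hx.2]
    simp only [klBin]
    rw [Real.log_div (ne_of_gt hμ1) (ne_of_gt hx1),
        Real.log_div (by intro h; linarith : (1:ℝ) - μ ≠ 0) (ne_of_gt hx2)]
  have := hg.congr_of_eventuallyEq heq.symm
  refine this.congr_deriv ?_
  field_simp
  ring

lemma klBin_ge (μ μ' : ℝ) (hμ : μ ∈ Ioo (0:ℝ) 1) (hμ' : μ' ∈ Ioo (0:ℝ) 1)
    (c : ℝ) (hc : 0 < c) (hbd : ∀ x ∈ uIcc μ μ', x * (1 - x) ≤ c) :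
    klBin μ μ' ≥ (μ' - μ) ^ 2 / (2 * c) := by
  have hsub : uIcc μ μ' ⊆ Ioo (0:ℝ) 1 := by
    intro x hx
    exact ⟨lt_of_lt_of_le (lt_min hμ.1 hμ'.1) hx.1,
           lt_of_le_of_lt hx.2 (max_lt hμ.2 hμ'.2)⟩
  have hpos : ∀ x ∈ uIcc μ μ', 0 < x * (1 - x) := fun x hx =>
    mul_pos (hsub hx).1 (by linarith [(hsub hx).2])
  have hcont : ContinuousOn (fun x => (x - μ) / (x * (1 - x))) (uIcc μ μ') := by
    apply ContinuousOn.div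
    · fun_prop
    · fun_prop
    · intro x hx; exact ne_of_gt (hpos x hx)
  have hint : IntervalIntegrable (fun x => (x - μ) / (x * (1 - x)))
      MeasureTheory.volume μ μ' := hcont.intervalIntegrable
  have h0 : klBin μ μ = 0 := by
    simp [klBin, div_self (ne_of_gt hμ.1),
      div_self (show (1:ℝ) - μ ≠ 0 by have := hμ.2; intro h; linarith)]
  have heq : klBin μ μ' = ∫ x in μ..μ', (x - μ) / (x * (1 - x)) := by
    rw [intervalIntegral.integral_eq_sub_of_hasDerivAt
      (fun x hx => hasDerivAt_klBin μ hμ (hsub hx)) hint, h0, sub_zero]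
  have hlinint : IntervalIntegrable (fun x => (x - μ) / c) MeasureTheory.volume μ μ' := by
    apply ContinuousOn.intervalIntegrable; fun_prop
  have hlin : (∫ x in μ..μ', (x - μ) / c) = (μ' - μ) ^ 2 / (2 * c) := by
    have : (∫ x in μ..μ', (x - μ) / c) = (∫ x in μ..μ', (x - μ)) / c := by
      rw [intervalIntegral.integral_div]
    rw [this, intervalIntegral.integral_sub
      (by apply ContinuousOn.intervalIntegrable; fun_prop)
      (by apply ContinuousOn.intervalIntegrable; fun_prop),
      integral_id, intervalIntegral.integral_const]
    field_simp
    ring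
  rw [heq, ge_iff_le, ← hlin]
  rcases le_total μ μ' with h | h
  · apply intervalIntegral.integral_mono_on h hlinint hint
    intro x hx
    rw [uIcc_of_le h] at hpos hbd
    have h1 : 0 ≤ x - μ := by linarith [hx.1]
    have h2 := hpos x hx
    have h3 := hbd x hx
    gcongr
  · rw [intervalIntegral.integral_symm μ' μ, intervalIntegral.integral_symm μ' μ,
      neg_le_neg_iff]
    apply intervalIntegral.integral_mono_on h hint.symm hlinint.symm
    intro x hx
    rw [uIcc_comm, uIcc_of_le h] at hpos hbd
    have h1 : x - μ ≤ 0 := by linarith [hx.2]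
    have h2 := hpos x hx
    have h3 := hbd x hx
    rw [div_le_div_iff₀ h2 hc]
    nlinarith

/-- Refined Pinsker-type lower bound for the binary KL divergence. -/
theorem klBin_lower_bound (μ μ' : ℝ) (hμ : μ ∈ Set.Ioo (0:ℝ) 1)
    (hμ' : μ' ∈ Set.Ioo (0:ℝ) 1) :
    klBin μ μ' ≥ (1/2) *
      max (|μ' - μ| ^ 2 / (μ * (1 - μ) + |μ' - μ|))
          (|μ' - μ| ^ 2 / (μ' * (1 - μ') + |μ' - μ|)) := by
  set Δ := |μ' - μ| with hΔ
  have hΔ0 : 0 ≤ Δ := abs_nonneg _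
  have hμ1 : (0:ℝ) < μ := hμ.1
  have hμ2 : μ < 1 := hμ.2
  have hμ'1 : (0:ℝ) < μ' := hμ'.1
  have hμ'2 : μ' < 1 := hμ'.2
  have hxbd : ∀ x ∈ uIcc μ μ', |x - μ| ≤ Δ ∧ |x - μ'| ≤ Δ := by
    intro x hx
    refine ⟨abs_sub_left_of_mem_uIcc hx, ?_⟩
    rw [abs_sub_comm]
    exact abs_sub_right_of_mem_uIcc hx
  have key : ∀ a ∈ Ioo (0:ℝ) 1, ∀ x ∈ Ioo (0:ℝ) 1, |x - a| ≤ Δ →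
      x * (1 - x) ≤ a * (1 - a) + Δ := by
    intro a ha x hx habs
    have h1 : x - a ≤ Δ := (abs_le.mp habs).2
    have h2 : -Δ ≤ x - a := (abs_le.mp habs).1
    nlinarith [mul_nonneg (by linarith : (0:ℝ) ≤ Δ - (x - a)) (by linarith [hx.2, ha.2] : (0:ℝ) ≤ 2 - x - a),
      mul_nonneg (by linarith : (0:ℝ) ≤ Δ + (x - a)) (by linarith [hx.1, ha.1] : (0:ℝ) ≤ x + a)]
  have hsub : uIcc μ μ' ⊆ Ioo (0:ℝ) 1 := by
    intro x hx
    exact ⟨lt_of_lt_of_le (lt_min hμ.1 hμ'.1) hx.1,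
           lt_of_le_of_lt hx.2 (max_lt hμ.2 hμ'.2)⟩
  have hc1 : 0 < μ * (1 - μ) + Δ := by nlinarith [mul_pos hμ1 (show (0:ℝ) < 1 - μ by linarith)]
  have hc2 : 0 < μ' * (1 - μ') + Δ := by nlinarith [mul_pos hμ'1 (show (0:ℝ) < 1 - μ' by linarith)]
  have hb1 : klBin μ μ' ≥ (μ' - μ) ^ 2 / (2 * (μ * (1 - μ) + Δ)) :=
    klBin_ge μ μ' hμ hμ' _ hc1
      (fun x hx => key μ hμ x (hsub hx) (hxbd x hx).1)
  have hb2 : klBin μ μ' ≥ (μ' - μ) ^ 2 / (2 * (μ' * (1 - μ') + Δ)) :=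
    klBin_ge μ μ' hμ hμ' _ hc2
      (fun x hx => key μ' hμ' x (hsub hx) (hxbd x hx).2)
  have hsq : (μ' - μ) ^ 2 = Δ ^ 2 := (sq_abs _).symm
  rw [ge_iff_le, mul_max_of_nonneg _ _ (by norm_num : (0:ℝ) ≤ 1/2)]
  apply max_le
  · have h : (1/2) * (Δ ^ 2 / (μ * (1 - μ) + Δ)) = Δ ^ 2 / (2 * (μ * (1 - μ) + Δ)) := by
      rw [one_div, inv_mul_eq_div, div_div, mul_comm]
    rw [h, ← hsq]; exact hb1
  · have h : (1/2) * (Δ ^ 2 / (μ' * (1 - μ') + Δ)) = Δ ^ 2 / (2 * (μ' * (1 - μ') + Δ)) := by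
      rw [one_div, inv_mul_eq_div, div_div, mul_comm]
    rw [h, ← hsq]; exact hb2
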